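/- M^[2](2, 4) = 5: with exactly 2 defectives among 4 items and tests of size exactly 2, the optimal worst-case number of tests is C(4,2) − 1 = 5. -/

import Mathlib

/-- An adaptive group-testing strategy on a population of `n` items:
a binary decision tree whose internal nodes test a subset (branching on
contaminated / pure) and whose leaves output a guess for the defective set. -/
inductive GTTree (n : ℕ) : Type where
  | leaf (guess : Finset (Fin n)) : GTTree n
  | node (test : Finset (Fin n)) (pos neg : GTTree n) : GTTree n

/-- Run the strategy when the true defective set is `D`. -/
def GTTree.run {n : ℕ} (D : Finset (Fin n)) : GTTree n → Finset (Fin n)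
  | .leaf g => g
  | .node t p q => if (t ∩ D).Nonempty then p.run D else q.run D

/-- Worst-case number of tests performed by the strategy. -/
def GTTree.depth {n : ℕ} : GTTree n → ℕ
  | .leaf _ => 0
  | .node _ p q => max p.depth q.depth + 1

/-- The strategy correctly identifies every possible defective set of size `d`. -/
def GTTree.Solves {n : ℕ} (T : GTTree n) (d : ℕ) : Prop :=
  ∀ D : Finset (Fin n), D.card = d → T.run D = D

/-- Every test set occurring in the tree has size exactly `k`. -/
def GTTree.SizeK {n : ℕ} (k : ℕ) : GTTree n → Prop
  | .leaf _ => True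
  | .node t p q => t.card = k ∧ p.SizeK k ∧ q.SizeK k

/-- `M d n`: optimal worst-case number of adaptive tests to find the `d`
defectives among `n` items, test sets of arbitrary size (`⊤` if unsolvable). -/
noncomputable def M (d n : ℕ) : ℕ∞ :=
  sInf {c : ℕ∞ | ∃ T : GTTree n, T.Solves d ∧ (T.depth : ℕ∞) = c}

/-- `Mfix k d n`: optimal worst-case number of adaptive tests to find the `d`
defectives among `n` items, every test set of size exactly `k` (`⊤` if unsolvable). -/
noncomputable def Mfix (k d n : ℕ) : ℕ∞ :=
  sInf {c : ℕ∞ | ∃ T : GTTree n, T.SizeK k ∧ T.Solves d ∧ (T.depth : ℕ∞) = c}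


def Ttree : GTTree 4 :=
  .node {0,1} (.node {0,2} (.node {0,3} (.node {1,2} (.node {1,3}
    (.leaf {0,1}) (.leaf {0,2})) (.leaf {0,3})) (.leaf {1,2})) (.leaf {1,3})) (.leaf {2,3})

lemma Ttree_solves : Ttree.Solves 2 := by
  show ∀ D : Finset (Fin 4), D.card = 2 → Ttree.run D = D
  decide
lemma Ttree_sizek : Ttree.SizeK 2 := by
  refine ⟨by decide, ⟨by decide, ⟨by decide, ⟨by decide, ⟨by decide, trivial, trivial⟩, trivial⟩, trivial⟩, trivial⟩, trivial⟩
lemma Ttree_depth : Ttree.depth = 5 := by decide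

lemma key : ∀ (T : GTTree 4), T.SizeK 2 → ∀ S : Finset (Finset (Fin 4)),
    (∀ D ∈ S, D.card = 2) → T.depth + 2 ≤ S.card →
    ∃ D1 ∈ S, ∃ D2 ∈ S, D1 ≠ D2 ∧ T.run D1 = T.run D2 := by
  intro T
  induction T with
  | leaf g =>
    intro _ S hS hcard
    have : 1 < S.card := by simp only [GTTree.depth] at hcard; omega
    obtain ⟨a, ha, b, hb, hab⟩ := Finset.one_lt_card.mp this
    exact ⟨a, ha, b, hb, hab, rfl⟩
  | node t p q ihp ihq =>
    intro hs S hS hcard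
    obtain ⟨ht, hp, hq⟩ := hs
    set S' := S.erase tᶜ with hS'
    have hsub : S' ⊆ S := Finset.erase_subset _ _
    have hcard' : p.depth + 2 ≤ S'.card := by
      have h1 : S.card - 1 ≤ S'.card := by
        rw [hS']
        rcases Finset.decidableMem tᶜ S with h | h
        · rw [Finset.erase_eq_of_notMem h]; omega
        · rw [Finset.card_erase_of_mem h]
      have : p.depth + 3 ≤ S.card := by
        have := le_max_left p.depth q.depth
        simp only [GTTree.depth] at hcard
        omega
      omega
    have hmem : ∀ D ∈ S', (t ∩ D).Nonempty := by
      intro D hD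
      by_contra hne
      have hDt : D ⊆ tᶜ := by
        intro x hx
        rw [Finset.mem_compl]
        intro hxt
        exact hne ⟨x, Finset.mem_inter.mpr ⟨hxt, hx⟩⟩
      have hcc : (tᶜ : Finset (Fin 4)).card = 2 := by
        rw [Finset.card_compl, ht]; rfl
      have hD2 : D.card = 2 := hS D (hsub hD)
      have : D = tᶜ := Finset.eq_of_subset_of_card_le hDt (by omega)
      exact Finset.notMem_erase tᶜ S (by rwa [this] at hD)
    obtain ⟨D1, h1, D2, h2, hne, hrun⟩ := ihp hp S' (fun D hD => hS D (hsub hD)) hcard'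
    refine ⟨D1, hsub h1, D2, hsub h2, hne, ?_⟩
    simp only [GTTree.run, if_pos (hmem D1 h1), if_pos (hmem D2 h2)]
    exact hrun

lemma lower : ∀ (T : GTTree 4), T.SizeK 2 → T.Solves 2 → 5 ≤ T.depth := by
  intro T hk hsol
  by_contra h
  push_neg at h
  have hd : T.depth + 2 ≤ (Finset.univ.powersetCard 2 : Finset (Finset (Fin 4))).card := by
    have : (Finset.univ.powersetCard 2 : Finset (Finset (Fin 4))).card = 6 := by decide
    omega
  obtain ⟨D1, h1, D2, h2, hne, hrun⟩ := key T hk _ (fun D hD => (Finset.mem_powersetCard.mp hD).2) hd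
  have c1 := hsol D1 (Finset.mem_powersetCard.mp h1).2
  have c2 := hsol D2 (Finset.mem_powersetCard.mp h2).2
  exact hne (c1 ▸ c2 ▸ hrun)

theorem stmt15 : Mfix 2 2 4 = 5 := by
  apply le_antisymm
  · exact sInf_le ⟨Ttree, Ttree_sizek, Ttree_solves, by rw [Ttree_depth]; rfl⟩
  · apply le_sInf
    rintro c ⟨T, hk, hs, rfl⟩
    exact_mod_cast lower T hk hs
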